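/- For each 1 ≤ s ≤ D and any two positions p = (p_1,...,p_D), q = (q_1,...,q_D) ∈ ℤ^D satisfying |p_j - q_j| ≤ b_j - 1 for all 1 ≤ j ≤ D (i.e., lying in a common box of size b_1 × b_2 × ... × b_D), one has |a^s(p) - a^s(q)| ≤ B - 1. In particular, a box-error of size b_1 × ... × b_D induces in the s-th component codeword a burst of length at most B. -/

import Mathlib

/-- `Bprod b m = B_m = b_1 b_2 ⋯ b_m` (0-indexed: the product of the first `m` values). -/
def Bprod (b : ℕ → ℤ) (m : ℕ) : ℤ := ∏ k ∈ Finset.range m, b k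

/-- The coefficient of `i_j` in the `s`-th coloring (0-indexed `s, j`):
`-B_{j-1}·B_D/B_{s-1}` for `j < s` and `B_{j-1}/B_{s-1}` for `j ≥ s`.
(All the divisions are exact.) -/
def colorCoeff (b : ℕ → ℤ) (D s j : ℕ) : ℤ :=
  if j < s then -(Bprod b j * Bprod b D / Bprod b s) else Bprod b j / Bprod b s

/-- The `s`-th coloring `a^s(i) = Σ_j colorCoeff · i_j` of `ℤ^D`. -/
def coloring (b : ℕ → ℤ) (D s : ℕ) (p : ℕ → ℤ) : ℤ :=
  ∑ j ∈ Finset.range D, colorCoeff b D s j * p j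

/-- For each coloring `a^s` and any two positions lying in a common box of size
`b_1 × ⋯ × b_D`, the colors differ by at most `B - 1`, where `B = b_1 ⋯ b_D`. -/
theorem stmt4 (D : ℕ) (hD : 1 ≤ D) (b : ℕ → ℤ) (hb : ∀ j < D, 0 < b j)
    (s : ℕ) (hs : s < D) (p q : ℕ → ℤ)
    (hbox : ∀ j < D, |p j - q j| ≤ b j - 1) :
    |coloring b D s p - coloring b D s q| ≤ Bprod b D - 1 := by
  -- T j = ∏_{k ∈ [s, j)} b k
  set T : ℕ → ℤ := fun j => ∏ k ∈ Finset.Ico s j, b k with hT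
  have hBpos : ∀ m, m ≤ D → 0 < Bprod b m := by
    intro m hm
    exact Finset.prod_pos fun k hk => hb k (lt_of_lt_of_le (Finset.mem_range.mp hk) hm)
  have hBs : (0:ℤ) < Bprod b s := hBpos s hs.le
  have hBsne : Bprod b s ≠ 0 := hBs.ne'
  have hTpos : ∀ j, j ≤ D → 0 < T j := by
    intro j hj
    exact Finset.prod_pos fun k hk =>
      hb k (lt_of_lt_of_le (Finset.mem_Ico.mp hk).2 hj)
  have hsplit : ∀ j, s ≤ j → Bprod b j = Bprod b s * T j := by
    intro j hj
    exact (Finset.prod_range_mul_prod_Ico b hj).symm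
  have hBposj : ∀ j, j ≤ D → 0 < Bprod b j := hBpos
  -- coefficient values
  have hclow : ∀ j, j < s → colorCoeff b D s j = -(Bprod b j * T D) := by
    intro j hj
    rw [colorCoeff, if_pos hj, hsplit D hs.le]
    rw [show Bprod b j * (Bprod b s * T D) = Bprod b s * (Bprod b j * T D) by ring,
      Int.mul_ediv_cancel_left _ hBsne]
  have hchigh : ∀ j, s ≤ j → colorCoeff b D s j = T j := by
    intro j hj
    rw [colorCoeff, if_neg (not_lt.mpr hj), hsplit j hj,
      Int.mul_ediv_cancel_left _ hBsne]
  -- difference of colorings as a single sum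
  have hdiff : coloring b D s p - coloring b D s q
      = ∑ j ∈ Finset.range D, colorCoeff b D s j * (p j - q j) := by
    rw [coloring, coloring, ← Finset.sum_sub_distrib]
    exact Finset.sum_congr rfl fun j _ => by ring
  rw [hdiff]
  have step1 : |∑ j ∈ Finset.range D, colorCoeff b D s j * (p j - q j)|
      ≤ ∑ j ∈ Finset.range D, |colorCoeff b D s j| * (b j - 1) := by
    refine (Finset.abs_sum_le_sum_abs _ _).trans (Finset.sum_le_sum ?_)
    intro j hj
    rw [abs_mul]
    exact mul_le_mul_of_nonneg_left (hbox j (Finset.mem_range.mp hj)) (abs_nonneg _)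
  refine step1.trans (le_of_eq ?_)
  -- split the sum at s
  have hsplitsum : ∑ j ∈ Finset.range D, |colorCoeff b D s j| * (b j - 1)
      = (∑ j ∈ Finset.range s, |colorCoeff b D s j| * (b j - 1))
        + ∑ j ∈ Finset.Ico s D, |colorCoeff b D s j| * (b j - 1) := by
    rw [Finset.range_eq_Ico, Finset.range_eq_Ico]
    exact (Finset.sum_Ico_consecutive (fun j => |colorCoeff b D s j| * (b j - 1)) (Nat.zero_le s) hs.le).symm
  rw [hsplitsum]
  -- part A
  have hA : ∑ j ∈ Finset.range s, |colorCoeff b D s j| * (b j - 1)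
      = T D * (Bprod b s - 1) := by
    have : ∀ j ∈ Finset.range s, |colorCoeff b D s j| * (b j - 1)
        = T D * (Bprod b (j+1) - Bprod b j) := by
      intro j hj
      have hjs := Finset.mem_range.mp hj
      have hjD : j < D := hjs.trans hs
      rw [hclow j hjs, abs_neg, abs_of_pos
        (mul_pos (hBposj j hjD.le) (hTpos D le_rfl))]
      have : Bprod b (j+1) = Bprod b j * b j := Finset.prod_range_succ b j
      rw [this]; ring
    rw [Finset.sum_congr rfl this, ← Finset.mul_sum, Finset.sum_range_sub]
    have h0 : Bprod b 0 = 1 := Finset.prod_range_zero b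
    rw [h0]
  -- part B
  have hB : ∑ j ∈ Finset.Ico s D, |colorCoeff b D s j| * (b j - 1)
      = T D - 1 := by
    have : ∀ j ∈ Finset.Ico s D, |colorCoeff b D s j| * (b j - 1)
        = T (j+1) - T j := by
      intro j hj
      obtain ⟨h1, h2⟩ := Finset.mem_Ico.mp hj
      rw [hchigh j h1, abs_of_pos (hTpos j h2.le)]
      have : T (j+1) = T j * b j := Finset.prod_Ico_succ_top h1 b
      rw [this]; ring
    rw [Finset.sum_congr rfl this, Finset.sum_Ico_eq_sum_range]
    have : ∀ k, T (s + k + 1) - T (s + k) = (fun k => T (s + k)) (k+1) - (fun k => T (s+k)) k := by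
      intro k; simp [Nat.add_assoc]
    rw [Finset.sum_congr rfl (fun k _ => this k), Finset.sum_range_sub (fun k => T (s+k))]
    rw [Nat.add_sub_cancel' hs.le, Nat.add_zero]
    have hTs : T s = 1 := by simp [hT]
    rw [hTs]
  rw [hA, hB, hsplit D hs.le]
  ring
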